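/- Let X be a compact metric space with its Borel σ-algebra, μ and ν Borel probability measures on X, and c : X × X → ℝ continuous and nonnegative. Then the entropically smoothed optimal transport cost converges to the unregularized optimal transport cost as the regularization vanishes: lim_{ε → 0⁺} W_{c,ε}(μ,ν) = W_c(μ,ν), where W_{c,ε}(μ,ν) = inf_{γ ∈ Γ(μ,ν)} [∫ c dγ + ε·KL(γ‖μ⊗ν)] and W_c(μ,ν) = inf_{γ ∈ Γ(μ,ν)} ∫ c dγ. -/

import Mathlib

open MeasureTheory Real

open Classical in
/-- Kullback–Leibler divergence: `∫ log(dμ/dρ) dμ` if `μ ≪ ρ`, `+∞` otherwise. -/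
noncomputable def KL {Ω : Type*} [MeasurableSpace Ω] (μ ρ : Measure Ω) : EReal :=
  if μ ≪ ρ then ((∫ ω, Real.log ((μ.rnDeriv ρ ω).toReal) ∂μ : ℝ) : EReal) else ⊤

/-- `γ` is a coupling of `μ` and `ν`. -/
def IsCoupling {A B : Type*} [MeasurableSpace A] [MeasurableSpace B]
    (γ : Measure (A × B)) (μ : Measure A) (ν : Measure B) : Prop :=
  IsProbabilityMeasure γ ∧ γ.map Prod.fst = μ ∧ γ.map Prod.snd = ν

open scoped ENNReal NNReal in
lemma KL_nonneg {Ω : Type*} [MeasurableSpace Ω] (γ ρ : Measure Ω)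
    [IsProbabilityMeasure γ] [IsProbabilityMeasure ρ] : 0 ≤ KL γ ρ := by
  rw [KL]
  split_ifs with h
  · rw [EReal.coe_nonneg]
    by_cases hint : Integrable (fun ω => Real.log ((γ.rnDeriv ρ ω).toReal)) γ
    · -- Jensen-type argument
      have hlt : ∫⁻ ω, (γ.rnDeriv ρ ω)⁻¹ ∂γ ≤ 1 := by
        rw [← MeasureTheory.lintegral_rnDeriv_mul h (f := fun ω => (γ.rnDeriv ρ ω)⁻¹)
          ((Measure.measurable_rnDeriv γ ρ).inv.aemeasurable)]
        refine le_trans (lintegral_mono fun ω => ?_) (by simp : ∫⁻ _, 1 ∂ρ ≤ 1)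
        rcases eq_or_ne (γ.rnDeriv ρ ω) 0 with h0 | h0
        · simp [h0]
        rcases eq_or_ne (γ.rnDeriv ρ ω) ⊤ with ht | ht
        · simp [ht]
        · rw [ENNReal.mul_inv_cancel h0 ht]
      have hF : Integrable (fun ω => ((γ.rnDeriv ρ ω).toReal)⁻¹) γ := by
        have := integrable_toReal_of_lintegral_ne_top
          ((Measure.measurable_rnDeriv γ ρ).inv.aemeasurable (μ := γ))
          (ne_top_of_le_ne_top ENNReal.one_ne_top hlt)
        simpa [ENNReal.toReal_inv] using this
      have hpos : ∀ᵐ ω ∂γ, 0 < γ.rnDeriv ρ ω := Measure.rnDeriv_pos h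
      have hfin : ∀ᵐ ω ∂γ, γ.rnDeriv ρ ω < ⊤ := h.ae_le (Measure.rnDeriv_lt_top γ ρ)
      have hkey : ∀ᵐ ω ∂γ, 1 - ((γ.rnDeriv ρ ω).toReal)⁻¹ ≤ Real.log ((γ.rnDeriv ρ ω).toReal) := by
        filter_upwards [hpos, hfin] with ω h0 h1
        have hf0 : 0 < (γ.rnDeriv ρ ω).toReal := ENNReal.toReal_pos h0.ne' h1.ne
        have := Real.log_le_sub_one_of_pos (inv_pos.2 hf0)
        rw [Real.log_inv] at this
        linarith
      have h1 : (1 : ℝ) - ∫ ω, ((γ.rnDeriv ρ ω).toReal)⁻¹ ∂γ ≤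
          ∫ ω, Real.log ((γ.rnDeriv ρ ω).toReal) ∂γ := by
        have := integral_mono_ae ((integrable_const (1:ℝ)).sub hF) hint hkey
        simpa [integral_sub (integrable_const (1:ℝ)) hF] using this
      have h2 : ∫ ω, ((γ.rnDeriv ρ ω).toReal)⁻¹ ∂γ ≤ 1 := by
        rw [integral_eq_lintegral_of_nonneg_ae (ae_of_all _ fun ω => inv_nonneg.2 ENNReal.toReal_nonneg)
          ((Measure.measurable_rnDeriv γ ρ).ennreal_toReal.inv.aestronglyMeasurable)]
        have hle : ∫⁻ ω, ENNReal.ofReal (((γ.rnDeriv ρ ω).toReal)⁻¹) ∂γ ≤ 1 := by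
          refine le_trans (lintegral_mono fun ω => ?_) hlt
          rcases eq_or_ne (γ.rnDeriv ρ ω) ⊤ with ht | ht
          · simp [ht]
          rcases eq_or_ne (γ.rnDeriv ρ ω) 0 with h0 | h0
          · simp [h0]
          · rw [← ENNReal.toReal_inv, ENNReal.ofReal_toReal (ENNReal.inv_ne_top.2 h0)]
        have := ENNReal.toReal_mono ENNReal.one_ne_top hle
        simpa using this
      linarith
    · simp [integral_undef hint]
  · exact le_top


lemma partition_sum {Y : Type*} [MeasurableSpace Y] (ρ : Measure Y) (t : ℕ → Set Y) (n : ℕ)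
    (hm : ∀ k, MeasurableSet (t k)) (hd : Pairwise (Function.onFun Disjoint t))
    (hcov : ∀ y : Y, ∃ k < n, y ∈ t k) {u : Set Y} (hu : MeasurableSet u) :
    ∑ k ∈ Finset.range n, ρ (u ∩ t k) = ρ u := by
  rw [← measure_biUnion_finset ?_ (fun k _ => hu.inter (hm k))]
  · congr 1
    apply subset_antisymm (Set.iUnion₂_subset fun i _ => Set.inter_subset_left)
    intro x hx
    obtain ⟨k, hk, hxk⟩ := hcov x
    exact Set.mem_biUnion (Finset.mem_range.2 hk) ⟨hx, hxk⟩
  · intro i _ j _ hij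
    exact ((hd hij).mono Set.inter_subset_right Set.inter_subset_right)


open scoped ENNReal NNReal in
lemma block_approx {X : Type*} [MetricSpace X] [CompactSpace X] [MeasurableSpace X] [BorelSpace X]
    (μ ν : Measure X) [IsProbabilityMeasure μ] [IsProbabilityMeasure ν]
    (c : X × X → ℝ) (hc : Continuous c) (hc0 : ∀ p, 0 ≤ c p)
    (γ : Measure (X × X)) (hγ : IsCoupling γ μ ν) {η : ℝ} (hη : 0 < η) :
    ∃ γ' : Measure (X × X), IsCoupling γ' μ ν ∧ γ' ≪ μ.prod ν ∧
      ∫ p, c p ∂γ' ≤ ∫ p, c p ∂γ + η := by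
  have hγprob : IsProbabilityMeasure γ := hγ.1
  -- uniform continuity
  obtain ⟨δ, hδpos, hδ⟩ := Metric.uniformContinuous_iff.mp
    (CompactSpace.uniformContinuous_of_continuous hc) (η/2) (half_pos hη)
  -- finite cover by balls of radius δ/2
  obtain ⟨t, ht⟩ := isCompact_univ.elim_finite_subcover (fun x : X => Metric.ball x (δ/2))
    (fun x => Metric.isOpen_ball) (fun x _ => Set.mem_iUnion.2 ⟨x, Metric.mem_ball_self (by positivity)⟩)
  set l := t.toList with hl
  set n := l.length with hn
  set B : ℕ → Set X := fun k => if h : k < n then Metric.ball l[k] (δ/2) else ∅ with hB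
  have hBmeas : ∀ k, MeasurableSet (B k) := by
    intro k
    rw [hB]
    dsimp only
    split_ifs
    · exact measurableSet_ball
    · exact MeasurableSet.empty
  have hBcov : ∀ x : X, ∃ k < n, x ∈ B k := by
    intro x
    obtain ⟨y, hyt, hxy⟩ := Set.mem_iUnion₂.1 (ht (Set.mem_univ x))
    obtain ⟨k, hk, hky⟩ := List.mem_iff_getElem.mp (Finset.mem_toList.2 hyt)
    refine ⟨k, hk, ?_⟩
    rw [hB]
    dsimp only
    rw [dif_pos hk]
    rw [Metric.mem_ball]; exact (congrArg (fun z => dist x z < δ / 2) hky).mpr hxy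
  set A : ℕ → Set X := disjointed B with hA
  have hAmeas : ∀ k, MeasurableSet (A k) := MeasurableSet.disjointed hBmeas
  have hAdisj : Pairwise (Function.onFun Disjoint A) := disjoint_disjointed B
  have hAcov : ∀ x : X, ∃ k < n, x ∈ A k := by
    intro x
    have : x ∈ ⋃ k, A k := by
      rw [hA, iUnion_disjointed]
      obtain ⟨k, hk, hxk⟩ := hBcov x
      exact Set.mem_iUnion.2 ⟨k, hxk⟩
    obtain ⟨k, hxk⟩ := Set.mem_iUnion.1 this
    refine ⟨k, ?_, hxk⟩
    by_contra hk
    have := disjointed_subset B k hxk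
    rw [hB] at this
    simp only [dif_neg hk] at this
    exact this
  have hAdiam : ∀ k, ∀ x ∈ A k, ∀ y ∈ A k, dist x y < δ := by
    intro k x hx y hy
    have hx' := disjointed_subset B k hx
    have hy' := disjointed_subset B k hy
    by_cases hk : k < n
    · rw [hB] at hx' hy'
      simp only [dif_pos hk, Metric.mem_ball] at hx' hy'
      calc dist x y ≤ dist x l[k] + dist l[k] y := dist_triangle _ _ _
        _ < δ/2 + δ/2 := by rw [dist_comm l[k] y] at *; exact add_lt_add hx' hy'
        _ = δ := by ring
    · rw [hB] at hx'
      simp only [dif_neg hk] at hx'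
      exact absurd hx' (Set.notMem_empty x)
  -- blocks
  set S : ℕ → ℕ → Set (X × X) := fun i j => A i ×ˢ A j with hS
  have hSmeas : ∀ i j, MeasurableSet (S i j) := fun i j => (hAmeas i).prod (hAmeas j)
  set m : ℕ → ℕ → ℝ≥0∞ := fun i j => γ (S i j) with hm
  set κ : ℕ → ℕ → ℝ≥0∞ := fun i j => m i j * (μ (A i))⁻¹ * (ν (A j))⁻¹ with hκ
  set γ' : Measure (X × X) :=
    ∑ i ∈ Finset.range n, ∑ j ∈ Finset.range n, κ i j • (μ.prod ν).restrict (S i j) with hγ'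
  -- marginal sums of m
  have hrow : ∀ i, ∑ j ∈ Finset.range n, m i j = μ (A i) := by
    intro i
    have := partition_sum γ (fun j => (Set.univ : Set X) ×ˢ A j) n
      (fun j => MeasurableSet.univ.prod (hAmeas j))
      (fun j j' hjj' => by
        refine Set.disjoint_left.2 fun p hp hp' => ?_
        exact Set.disjoint_left.1 (hAdisj hjj') hp.2 hp'.2)
      (fun p => by obtain ⟨k, hk, hx⟩ := hAcov p.2; exact ⟨k, hk, Set.mem_univ _, hx⟩)
      ((hAmeas i).prod MeasurableSet.univ)
    have heq : ∀ j, (A i ×ˢ (Set.univ : Set X)) ∩ ((Set.univ : Set X) ×ˢ A j) = S i j := by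
      intro j; rw [Set.prod_inter_prod]; simp [hS]
    simp only [heq] at this
    rw [this, Set.prod_univ, ← Measure.map_apply measurable_fst (hAmeas i), hγ.2.1]
  have hcol : ∀ j, ∑ i ∈ Finset.range n, m i j = ν (A j) := by
    intro j
    have := partition_sum γ (fun i => A i ×ˢ (Set.univ : Set X)) n
      (fun i => (hAmeas i).prod MeasurableSet.univ)
      (fun i i' hii' => by
        refine Set.disjoint_left.2 fun p hp hp' => ?_
        exact Set.disjoint_left.1 (hAdisj hii') hp.1 hp'.1)
      (fun p => by obtain ⟨k, hk, hx⟩ := hAcov p.1; exact ⟨k, hk, hx, Set.mem_univ _⟩)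
      (MeasurableSet.univ.prod (hAmeas j))
    have heq : ∀ i, ((Set.univ : Set X) ×ˢ A j) ∩ (A i ×ˢ (Set.univ : Set X)) = S i j := by
      intro i; rw [Set.prod_inter_prod]; simp [hS]
    simp only [heq] at this
    rw [this, Set.univ_prod, ← Measure.map_apply measurable_snd (hAmeas j), hγ.2.2]
  have hmμ : ∀ i j, m i j ≤ μ (A i) := by
    intro i j
    rw [hm, ← hγ.2.1, Measure.map_apply measurable_fst (hAmeas i), ← Set.prod_univ]
    exact measure_mono (Set.prod_mono subset_rfl (Set.subset_univ _))
  have hmν : ∀ i j, m i j ≤ ν (A j) := by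
    intro i j
    rw [hm, ← hγ.2.2, Measure.map_apply measurable_snd (hAmeas j), ← Set.univ_prod]
    exact measure_mono (Set.prod_mono (Set.subset_univ _) subset_rfl)
  -- key algebraic identities
  have key1 : ∀ i j, κ i j * ν (A j) = m i j * (μ (A i))⁻¹ := by
    intro i j
    rcases eq_or_ne (ν (A j)) 0 with h0 | h0
    · have hm0 : m i j = 0 := le_antisymm (h0 ▸ hmν i j) (zero_le ..)
      simp [hκ, hm0]
    · rw [hκ, mul_assoc, ENNReal.inv_mul_cancel h0 (measure_ne_top _ _), mul_one]
  have key1' : ∀ i j, κ i j * μ (A i) = m i j * (ν (A j))⁻¹ := by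
    intro i j
    rcases eq_or_ne (μ (A i)) 0 with h0 | h0
    · have hm0 : m i j = 0 := le_antisymm (h0 ▸ hmμ i j) (zero_le ..)
      simp [hκ, hm0]
    · have : κ i j * μ (A i) = m i j * (ν (A j))⁻¹ * ((μ (A i))⁻¹ * μ (A i)) := by
        rw [hκ]; ring
      rw [this, ENNReal.inv_mul_cancel h0 (measure_ne_top _ _), mul_one]
  have key2 : ∀ i j, κ i j * (μ (A i) * ν (A j)) = m i j := by
    intro i j
    rcases eq_or_ne (μ (A i)) 0 with h0 | h0
    · have hm0 : m i j = 0 := le_antisymm (h0 ▸ hmμ i j) (zero_le ..)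
      simp [hκ, hm0]
    · have : κ i j * (μ (A i) * ν (A j)) = (κ i j * ν (A j)) * μ (A i) := by ring
      rw [this, key1, mul_assoc, ENNReal.inv_mul_cancel h0 (measure_ne_top _ _), mul_one]
  -- first marginal
  have hmapfst : γ'.map Prod.fst = μ := by
    ext s hs
    rw [Measure.map_apply measurable_fst hs, ← Set.prod_univ, hγ']
    rw [Measure.finset_sum_apply]
    have hterm : ∀ i ∈ Finset.range n,
        (∑ j ∈ Finset.range n, κ i j • (μ.prod ν).restrict (S i j)) (s ×ˢ (Set.univ : Set X))
          = μ (s ∩ A i) := by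
      intro i _
      rw [Measure.finset_sum_apply]
      have : ∀ j ∈ Finset.range n,
          (κ i j • (μ.prod ν).restrict (S i j)) (s ×ˢ (Set.univ : Set X))
            = (κ i j * ν (A j)) * μ (s ∩ A i) := by
        intro j _
        rw [Measure.smul_apply, Measure.restrict_apply' (hSmeas i j), smul_eq_mul]
        have : (s ×ˢ (Set.univ : Set X)) ∩ S i j = (s ∩ A i) ×ˢ A j := by
          rw [hS, Set.prod_inter_prod]; simp
        rw [this, Measure.prod_prod]
        ring
      rw [Finset.sum_congr rfl this, ← Finset.sum_mul, Finset.sum_congr rfl (fun j _ => key1 i j),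
        ← Finset.sum_mul, hrow]
      rcases eq_or_ne (μ (A i)) 0 with h0 | h0
      · have : μ (s ∩ A i) = 0 :=
          le_antisymm (h0 ▸ measure_mono Set.inter_subset_right) (zero_le ..)
        simp [this]
      · rw [ENNReal.mul_inv_cancel h0 (measure_ne_top _ _), one_mul]
    rw [Finset.sum_congr rfl hterm]
    exact partition_sum μ A n hAmeas hAdisj hAcov hs
  -- second marginal
  have hmapsnd : γ'.map Prod.snd = ν := by
    ext s hs
    rw [Measure.map_apply measurable_snd hs, ← Set.univ_prod, hγ']
    rw [Measure.finset_sum_apply]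
    simp only [Measure.finset_sum_apply]
    rw [Finset.sum_comm]
    have hterm : ∀ j ∈ Finset.range n,
        ∑ i ∈ Finset.range n,
          (κ i j • (μ.prod ν).restrict (S i j)) ((Set.univ : Set X) ×ˢ s) = ν (s ∩ A j) := by
      intro j _
      have : ∀ i ∈ Finset.range n,
          (κ i j • (μ.prod ν).restrict (S i j)) ((Set.univ : Set X) ×ˢ s)
            = (κ i j * μ (A i)) * ν (s ∩ A j) := by
        intro i _
        rw [Measure.smul_apply, Measure.restrict_apply' (hSmeas i j), smul_eq_mul]
        have : ((Set.univ : Set X) ×ˢ s) ∩ S i j = A i ×ˢ (s ∩ A j) := by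
          rw [hS, Set.prod_inter_prod]; simp
        rw [this, Measure.prod_prod]
        ring
      rw [Finset.sum_congr rfl this, ← Finset.sum_mul, Finset.sum_congr rfl (fun i _ => key1' i j),
        ← Finset.sum_mul, hcol]
      rcases eq_or_ne (ν (A j)) 0 with h0 | h0
      · have : ν (s ∩ A j) = 0 :=
          le_antisymm (h0 ▸ measure_mono Set.inter_subset_right) (zero_le ..)
        simp [this]
      · rw [ENNReal.mul_inv_cancel h0 (measure_ne_top _ _), one_mul]
    rw [Finset.sum_congr rfl hterm]
    exact partition_sum ν A n hAmeas hAdisj hAcov hs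
  -- probability
  have hγ'prob : IsProbabilityMeasure γ' := by
    constructor
    have : γ' Set.univ = (γ'.map Prod.fst) Set.univ := by
      rw [Measure.map_apply measurable_fst MeasurableSet.univ, Set.preimage_univ]
    rw [this, hmapfst, measure_univ]
  -- absolute continuity
  have hac : γ' ≪ μ.prod ν := by
    refine Measure.AbsolutelyContinuous.mk fun u hu hu0 => ?_
    rw [hγ', Measure.finset_sum_apply]
    refine Finset.sum_eq_zero fun i _ => ?_
    rw [Measure.finset_sum_apply]
    refine Finset.sum_eq_zero fun j _ => ?_
    rw [Measure.smul_apply, Measure.restrict_apply' (hSmeas i j), smul_eq_mul]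
    rw [measure_mono_null Set.inter_subset_left hu0, mul_zero]
  -- cost comparison
  have hXne : Nonempty X := by
    by_contra hne
    rw [not_nonempty_iff] at hne
    have h1 : μ Set.univ = 1 := measure_univ
    rw [Set.univ_eq_empty_iff.2 hne, measure_empty] at h1
    exact zero_ne_one h1
  obtain ⟨pM, -, hpM⟩ := isCompact_univ.exists_isMaxOn
    (Set.univ_nonempty (α := X × X)) hc.continuousOn
  set g : X × X → ℝ≥0∞ := fun p => ENNReal.ofReal (c p) with hg
  have hgmeas : Measurable g := ENNReal.measurable_ofReal.comp hc.measurable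
  have hγfin : ∫⁻ p, g p ∂γ ≠ ⊤ := by
    refine ne_top_of_le_ne_top ?_
      (lintegral_mono fun p => ENNReal.ofReal_le_ofReal (hpM (Set.mem_univ p)))
    rw [lintegral_const, measure_univ, mul_one]
    exact ENNReal.ofReal_ne_top
  have hrepr : ∀ ρ : Measure (X × X), ∫ p, c p ∂ρ = (∫⁻ p, g p ∂ρ).toReal := fun ρ =>
    integral_eq_lintegral_of_nonneg_ae (Filter.Eventually.of_forall hc0) hc.aestronglyMeasurable
  -- splitting the lintegral over γ into blocks
  have hγsplit : ∑ i ∈ Finset.range n, ∑ j ∈ Finset.range n, ∫⁻ p in S i j, g p ∂γ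
      = ∫⁻ p, g p ∂γ := by
    rw [← Finset.sum_product' (s := Finset.range n) (t := Finset.range n)
      (f := fun i j => ∫⁻ p in S i j, g p ∂γ)]
    rw [← lintegral_biUnion_finset (s := Finset.range n ×ˢ Finset.range n)
      (t := fun q => S q.1 q.2) ?_ (fun q _ => hSmeas q.1 q.2)]
    · have : ⋃ q ∈ Finset.range n ×ˢ Finset.range n, S q.1 q.2 = Set.univ := by
        apply Set.eq_univ_of_forall
        intro p
        obtain ⟨i, hi, hpi⟩ := hAcov p.1
        obtain ⟨j, hj, hpj⟩ := hAcov p.2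
        have hq : ((i, j) : ℕ × ℕ) ∈ Finset.range n ×ˢ Finset.range n :=
          Finset.mem_product.2 ⟨Finset.mem_range.2 hi, Finset.mem_range.2 hj⟩
        refine Set.mem_biUnion hq ?_
        rw [hS]
        exact ⟨hpi, hpj⟩
      rw [this, Measure.restrict_univ]
    · intro q hq q' hq' hne
      rcases eq_or_ne q.1 q'.1 with h1 | h1
      · have h2 : q.2 ≠ q'.2 := fun h2 => hne (Prod.ext h1 h2)
        refine Set.disjoint_left.2 fun p hp hp' => ?_
        rw [hS] at hp hp'
        exact Set.disjoint_left.1 (hAdisj h2) hp.2 hp'.2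
      · refine Set.disjoint_left.2 fun p hp hp' => ?_
        rw [hS] at hp hp'
        exact Set.disjoint_left.1 (hAdisj h1) hp.1 hp'.1
  have hmsum : ∑ i ∈ Finset.range n, ∑ j ∈ Finset.range n, m i j = 1 := by
    rw [Finset.sum_congr rfl (fun i _ => hrow i)]
    have := partition_sum μ A n hAmeas hAdisj hAcov MeasurableSet.univ
    simpa using this
  -- per-block bound
  have hblock : ∀ i j, κ i j * ∫⁻ p in S i j, g p ∂(μ.prod ν)
      ≤ (∫⁻ p in S i j, g p ∂γ) + ENNReal.ofReal η * m i j := by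
    intro i j
    rcases eq_or_ne (m i j) 0 with hm0 | hm0
    · have hκ0 : κ i j = 0 := by simp [hκ, hm0]
      simp [hκ0]
    · obtain ⟨z, hzS⟩ := nonempty_of_measure_ne_zero hm0
      have hub : ∀ p ∈ S i j, c p ≤ c z + η/2 := by
        intro p hp
        rw [hS] at hp hzS
        have hd : dist p z < δ := by
          rw [Prod.dist_eq, max_lt_iff]
          exact ⟨hAdiam i p.1 hp.1 z.1 hzS.1, hAdiam j p.2 hp.2 z.2 hzS.2⟩
        have h3 := abs_lt.1 ((Real.dist_eq _ _) ▸ hδ hd)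
        linarith [h3.2]
      have hlb : ∀ p ∈ S i j, c z - η/2 ≤ c p := by
        intro p hp
        rw [hS] at hp hzS
        have hd : dist p z < δ := by
          rw [Prod.dist_eq, max_lt_iff]
          exact ⟨hAdiam i p.1 hp.1 z.1 hzS.1, hAdiam j p.2 hp.2 z.2 hzS.2⟩
        have h3 := abs_lt.1 ((Real.dist_eq _ _) ▸ hδ hd)
        linarith [h3.1]
      have h1 : ∫⁻ p in S i j, g p ∂(μ.prod ν) ≤ ENNReal.ofReal (c z + η/2) * (μ.prod ν) (S i j) := by
        rw [← setLIntegral_const (S i j) (ENNReal.ofReal (c z + η/2))]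
        exact setLIntegral_mono measurable_const fun p hp => ENNReal.ofReal_le_ofReal (hub p hp)
      have h2 : ENNReal.ofReal (c z - η/2) * γ (S i j) ≤ ∫⁻ p in S i j, g p ∂γ := by
        rw [← setLIntegral_const (S i j) (ENNReal.ofReal (c z - η/2))]
        exact setLIntegral_mono hgmeas fun p hp => ENNReal.ofReal_le_ofReal (hlb p hp)
      calc κ i j * ∫⁻ p in S i j, g p ∂(μ.prod ν)
          ≤ κ i j * (ENNReal.ofReal (c z + η/2) * (μ.prod ν) (S i j)) := mul_le_mul_right h1 _
        _ = ENNReal.ofReal (c z + η/2) * (κ i j * (μ.prod ν) (S i j)) := by ring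
        _ = ENNReal.ofReal (c z + η/2) * m i j := by
              have : (μ.prod ν) (S i j) = μ (A i) * ν (A j) := by
                rw [hS]; exact Measure.prod_prod _ _
              rw [this, key2]
        _ ≤ (ENNReal.ofReal (c z - η/2) + ENNReal.ofReal η) * m i j := by
              refine mul_le_mul_left ?_ _
              have heq : c z + η/2 = (c z - η/2) + η := by ring
              rw [heq]
              exact ENNReal.ofReal_add_le
        _ = ENNReal.ofReal (c z - η/2) * m i j + ENNReal.ofReal η * m i j := by rw [add_mul]
        _ ≤ (∫⁻ p in S i j, g p ∂γ) + ENNReal.ofReal η * m i j := by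
              exact add_le_add_left (by rw [hm] at *; exact h2) _
  have hcost : ∫⁻ p, g p ∂γ' ≤ ∫⁻ p, g p ∂γ + ENNReal.ofReal η := by
    rw [hγ']
    rw [lintegral_finset_sum_measure]
    simp only [lintegral_finset_sum_measure, lintegral_smul_measure]
    refine le_trans (Finset.sum_le_sum fun i _ => Finset.sum_le_sum fun j _ => hblock i j) ?_
    rw [← hγsplit]
    simp only [Finset.sum_add_distrib]
    refine add_le_add_right ?_ _
    simp only [← Finset.mul_sum]
    rw [hmsum, mul_one]
  refine ⟨γ', ⟨hγ'prob, hmapfst, hmapsnd⟩, hac, ?_⟩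
  rw [hrepr γ', hrepr γ]
  have h2 : (∫⁻ p, g p ∂γ').toReal ≤ (∫⁻ p, g p ∂γ + ENNReal.ofReal η).toReal :=
    ENNReal.toReal_mono (ENNReal.add_ne_top.2 ⟨hγfin, ENNReal.ofReal_ne_top⟩) hcost
  rwa [ENNReal.toReal_add hγfin ENNReal.ofReal_ne_top, ENNReal.toReal_ofReal hη.le] at h2



theorem smoothed_OT_tendsto_OT_as_eps_to_zero
    {X : Type*} [MetricSpace X] [CompactSpace X] [MeasurableSpace X] [BorelSpace X]
    (μ ν : Measure X) [IsProbabilityMeasure μ] [IsProbabilityMeasure ν]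
    (c : X × X → ℝ) (hc : Continuous c) (hc0 : ∀ p, 0 ≤ c p) :
    Filter.Tendsto
      (fun ε : ℝ => ⨅ γ : {γ : Measure (X × X) // IsCoupling γ μ ν},
        ((∫ p, c p ∂γ.1 : ℝ) : EReal) + (ε : EReal) * KL γ.1 (μ.prod ν))
      (nhdsWithin 0 (Set.Ioi 0))
      (nhds (⨅ γ : {γ : Measure (X × X) // IsCoupling γ μ ν},
        ((∫ p, c p ∂γ.1 : ℝ) : EReal))) := by
  rw [tendsto_order]
  constructor
  · intro a ha
    filter_upwards [self_mem_nhdsWithin] with ε hε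
    rw [Set.mem_Ioi] at hε
    refine lt_of_lt_of_le ha (le_iInf fun γ => ?_)
    refine le_trans (iInf_le _ γ) ?_
    haveI : IsProbabilityMeasure γ.1 := γ.2.1
    have hKL : 0 ≤ KL γ.1 (μ.prod ν) := KL_nonneg γ.1 (μ.prod ν)
    have hmul : (0 : EReal) ≤ (ε : EReal) * KL γ.1 (μ.prod ν) :=
      mul_nonneg (by exact_mod_cast hε.le) hKL
    exact le_add_of_nonneg_right hmul
  · intro a ha
    obtain ⟨γ, hγa⟩ := iInf_lt_iff.1 ha
    obtain ⟨r, hbr, hra⟩ := EReal.exists_between_coe_real hγa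
    have hbr' : ∫ p, c p ∂γ.1 < r := by exact_mod_cast hbr
    set η := (r - ∫ p, c p ∂γ.1) / 2 with hηdef
    have hη : 0 < η := by rw [hηdef]; linarith
    obtain ⟨γ', hγ'c, hγ'ac, hγ'cost⟩ := block_approx μ ν c hc hc0 γ.1 γ.2 hη
    haveI : IsProbabilityMeasure γ' := hγ'c.1
    have hKLeq : KL γ' (μ.prod ν)
        = ((∫ ω, Real.log ((γ'.rnDeriv (μ.prod ν) ω).toReal) ∂γ' : ℝ) : EReal) := by
      rw [KL, if_pos hγ'ac]
    set K := ∫ ω, Real.log ((γ'.rnDeriv (μ.prod ν) ω).toReal) ∂γ' with hK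
    have hK0 : (0 : ℝ) ≤ K := by
      have h := KL_nonneg γ' (μ.prod ν)
      rw [hKLeq] at h
      exact_mod_cast h
    have hrgap : ∫ p, c p ∂γ.1 + η < r := by rw [hηdef]; linarith
    set ε₀ := (r - (∫ p, c p ∂γ.1 + η)) / (K + 1) with hε₀
    have hε₀pos : 0 < ε₀ := div_pos (by linarith) (by linarith)
    filter_upwards [Ioo_mem_nhdsGT_of_mem (Set.left_mem_Ico.2 hε₀pos)] with ε hε
    refine lt_of_le_of_lt (iInf_le _ ⟨γ', hγ'c⟩) ?_
    have hval : ((∫ p, c p ∂(⟨γ', hγ'c⟩ : {γ : Measure (X × X) // IsCoupling γ μ ν}).1 : ℝ) : EReal)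
        + (ε : EReal) * KL (⟨γ', hγ'c⟩ : {γ : Measure (X × X) // IsCoupling γ μ ν}).1 (μ.prod ν)
        = ((∫ p, c p ∂γ' + ε * K : ℝ) : EReal) := by
      rw [hKLeq, ← EReal.coe_mul, ← EReal.coe_add]
    rw [hval]
    refine lt_trans ?_ hra
    rw [EReal.coe_lt_coe_iff]
    obtain ⟨hε1, hε2⟩ := hε
    have h1 : ε₀ * (K + 1) = r - (∫ p, c p ∂γ.1 + η) := by
      rw [hε₀, div_mul_cancel₀]
      linarith
    have h2 : ε * (K + 1) < ε₀ * (K + 1) := by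
      exact mul_lt_mul_of_pos_right hε2 (by linarith)
    have h3 : ε * K ≤ ε * (K + 1) := by nlinarith
    linarith
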